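/- For μ < 0 let e(μ) > 4 solve (μ/(2π)) ∫_T dq/(𝔢(q) - e(μ)) = 1. Then lim_{μ ↗ 0} (e(μ) - 4)/μ² = 1/8. -/

import Mathlib

open Real

noncomputable def 𝔢 (q : ℝ) : ℝ := (1 - Real.cos q) ^ 2

/-- `∫_T dq/(𝔢(q) - z)`. -/
noncomputable def I (z : ℝ) : ℝ := ∫ q in (-π)..π, 1 / (𝔢 q - z)

/-- `Δ(μ; z) = 1 - (μ/(2π)) ∫_T dq/(𝔢(q) - z)`. -/
noncomputable def Δ (μ z : ℝ) : ℝ := 1 - μ / (2 * π) * I z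

lemma poisson_deriv {s : ℝ} (hs : |s| < 1) (q : ℝ) :
    HasDerivAt (fun x => x + 2 * arctan (s * Real.sin x / (1 - s * Real.cos x)))
      ((1 - s ^ 2) / (1 - 2 * s * Real.cos q + s ^ 2)) q := by
  have hb : ∀ x : ℝ, 0 < 1 - s * Real.cos x := by
    intro x
    have h1 : |s * Real.cos x| ≤ |s| := by
      rw [abs_mul]
      exact mul_le_of_le_one_right (abs_nonneg s) (abs_cos_le_one x)
    have := abs_le.mp h1
    linarith [this.2]
  have hD : 0 < 1 - 2 * s * Real.cos q + s ^ 2 := by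
    have h1 := hb q
    nlinarith [sin_sq_add_cos_sq q, sq_nonneg (Real.sin q), sq_nonneg s]
  have h1 : HasDerivAt (fun x => s * Real.sin x) (s * Real.cos q) q :=
    (Real.hasDerivAt_sin q).const_mul s
  have h2 : HasDerivAt (fun x => 1 - s * Real.cos x) (s * Real.sin q) q := by
    have := ((Real.hasDerivAt_cos q).const_mul s).const_sub 1
    simpa using this
  have h3 : HasDerivAt (fun x => s * Real.sin x / (1 - s * Real.cos x))
      ((s * Real.cos q * (1 - s * Real.cos q) - s * Real.sin q * (s * Real.sin q)) /
        (1 - s * Real.cos q) ^ 2) q := h1.div h2 (ne_of_gt (hb q))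
  have h4 := h3.arctan
  have h5 := ((hasDerivAt_id q).add (h4.const_mul 2))
  refine h5.congr_deriv ?_
  symm
  have hbq := hb q
  have hpyth := sin_sq_add_cos_sq q
  set c := Real.cos q with hc
  set n := Real.sin q with hn
  have h6 : 1 + (s * n / (1 - s * c)) ^ 2 = (1 - 2 * s * c + s ^ 2) / (1 - s * c) ^ 2 := by
    field_simp
    linear_combination s ^ 2 * hpyth
  rw [h6, one_div_div]
  have h7 : 1 + 2 * ((1 - s * c) ^ 2 / (1 - 2 * s * c + s ^ 2) *
       ((s * c * (1 - s * c) - s * n * (s * n)) / (1 - s * c) ^ 2)) =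
      ((1 - 2 * s * c + s ^ 2) + 2 * (s * c * (1 - s * c) - s ^ 2 * n ^ 2)) /
        (1 - 2 * s * c + s ^ 2) := by
    field_simp
  rw [h7]
  congr 1
  linear_combination (2 * s ^ 2) * hpyth

lemma poisson_int {s : ℝ} (hs : |s| < 1) :
    ∫ q in (-π)..π, (1 - s ^ 2) / (1 - 2 * s * Real.cos q + s ^ 2) = 2 * π := by
  have hD : ∀ x : ℝ, 0 < 1 - 2 * s * Real.cos x + s ^ 2 := by
    intro x
    have h1 : |s * Real.cos x| ≤ |s| := by
      rw [abs_mul]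
      exact mul_le_of_le_one_right (abs_nonneg s) (abs_cos_le_one x)
    have h2 := abs_le.mp h1
    have h3 := abs_le.mp hs.le
    nlinarith [sin_sq_add_cos_sq x, sq_nonneg (Real.sin x)]
  have hcont : Continuous fun q : ℝ => (1 - s ^ 2) / (1 - 2 * s * Real.cos q + s ^ 2) :=
    continuous_const.div (by continuity) (fun x => (hD x).ne')
  have := intervalIntegral.integral_eq_sub_of_hasDerivAt
    (f := fun x => x + 2 * arctan (s * Real.sin x / (1 - s * Real.cos x)))
    (fun x _ => poisson_deriv hs x) (hcont.intervalIntegrable (-π) π)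
  rw [this]
  simp [Real.sin_pi, Real.arctan_zero]
  ring

lemma int_cos (b ε : ℝ) (hb : 1 < b) (hε : ε ^ 2 = 1) :
    ∫ q in (-π)..π, 1 / (b - ε * Real.cos q) = 2 * π / Real.sqrt (b ^ 2 - 1) := by
  set k := Real.sqrt (b ^ 2 - 1) with hkdef
  have hk2 : k ^ 2 = b ^ 2 - 1 := Real.sq_sqrt (by nlinarith)
  have hk0 : 0 < k := Real.sqrt_pos.mpr (by nlinarith)
  have hkb : k < b := by nlinarith
  have ht0 : 0 < b - k := by linarith
  have ht1 : b - k < 1 := by nlinarith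
  have hεabs : |ε| = 1 := by
    have := sq_abs ε
    nlinarith [abs_nonneg ε]
  set s := ε * (b - k) with hsdef
  have hs : |s| < 1 := by
    rw [hsdef, abs_mul, hεabs, one_mul, abs_of_pos ht0]; exact ht1
  have hpos : ∀ x : ℝ, 0 < b - ε * Real.cos x := by
    intro x
    have h1 : |ε * Real.cos x| ≤ 1 := by
      rw [abs_mul, hεabs, one_mul]; exact abs_cos_le_one x
    have := abs_le.mp h1
    linarith [this.2]
  have hcong : ∀ q : ℝ, 1 / (b - ε * Real.cos q)
      = (1 / k) * ((1 - s ^ 2) / (1 - 2 * s * Real.cos q + s ^ 2)) := by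
    intro q
    have h1 : 1 - s ^ 2 = 2 * k * (b - k) := by
      rw [hsdef]; nlinarith
    have h2 : 1 - 2 * s * Real.cos q + s ^ 2 = 2 * (b - k) * (b - ε * Real.cos q) := by
      rw [hsdef]; nlinarith
    rw [h1, h2]
    rw [div_mul_div_comm, one_mul]
    rw [div_eq_div_iff (hpos q).ne'
      (mul_pos hk0 (mul_pos (by linarith : (0:ℝ) < 2 * (b - k)) (hpos q))).ne']
    ring
  calc ∫ q in (-π)..π, 1 / (b - ε * Real.cos q)
      = ∫ q in (-π)..π, (1 / k) * ((1 - s ^ 2) / (1 - 2 * s * Real.cos q + s ^ 2)) := by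
        exact intervalIntegral.integral_congr (fun q _ => hcong q)
    _ = (1 / k) * ∫ q in (-π)..π, (1 - s ^ 2) / (1 - 2 * s * Real.cos q + s ^ 2) := by
        exact intervalIntegral.integral_const_mul _ _
    _ = (1 / k) * (2 * π) := by rw [poisson_int hs]
    _ = 2 * π / k := by ring

lemma I_eval (a : ℝ) (ha : 2 < a) :
    I (a ^ 2) = -(1 / (2 * a)) *
      (2 * π / Real.sqrt (a ^ 2 - 2 * a) + 2 * π / Real.sqrt (a ^ 2 + 2 * a)) := by
  have hd1 : ∀ q : ℝ, 0 < (a - 1) - (-1) * Real.cos q := by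
    intro q; have := Real.neg_one_le_cos q; linarith
  have hd2 : ∀ q : ℝ, 0 < (a + 1) - 1 * Real.cos q := by
    intro q; have := Real.cos_le_one q; linarith
  have hcong : ∀ q : ℝ, 1 / (𝔢 q - a ^ 2) =
      (-(1 / (2 * a))) * (1 / ((a - 1) - (-1) * Real.cos q) + 1 / ((a + 1) - 1 * Real.cos q)) := by
    intro q
    have h1 := hd1 q
    have h2 := hd2 q
    set d1 : ℝ := (a - 1) - (-1) * Real.cos q with hd1def
    set d2 : ℝ := (a + 1) - 1 * Real.cos q with hd2def
    have hsum : d1 + d2 = 2 * a := by rw [hd1def, hd2def]; ring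
    have hne : 𝔢 q - a ^ 2 = -(d1 * d2) := by
      rw [hd1def, hd2def]; simp only [𝔢]; ring
    rw [hne]
    have ha0 : a ≠ 0 := by linarith
    field_simp [h1.ne', h2.ne']
    linear_combination (d1 * d2) * hsum
  have hc1 : Continuous fun q : ℝ => 1 / ((a - 1) - (-1) * Real.cos q) :=
    continuous_const.div (by continuity) (fun x => (hd1 x).ne')
  have hc2 : Continuous fun q : ℝ => 1 / ((a + 1) - 1 * Real.cos q) :=
    continuous_const.div (by continuity) (fun x => (hd2 x).ne')
  have step1 : I (a ^ 2) = (-(1 / (2 * a))) *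
      ((∫ q in (-π)..π, 1 / ((a - 1) - (-1) * Real.cos q)) +
       (∫ q in (-π)..π, 1 / ((a + 1) - 1 * Real.cos q))) := by
    rw [I]
    rw [intervalIntegral.integral_congr (fun q _ => hcong q)]
    rw [intervalIntegral.integral_const_mul]
    rw [intervalIntegral.integral_add (hc1.intervalIntegrable _ _) (hc2.intervalIntegrable _ _)]
  rw [step1, int_cos (a - 1) (-1) (by linarith) (by ring),
    int_cos (a + 1) 1 (by linarith) (by ring)]
  rw [show (a - 1) ^ 2 - 1 = a ^ 2 - 2 * a by ring, show (a + 1) ^ 2 - 1 = a ^ 2 + 2 * a by ring]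

noncomputable def gfun (x : ℝ) : ℝ :=
  (Real.sqrt (x - 2 * Real.sqrt x) + Real.sqrt (x + 2 * Real.sqrt x)) ^ 2 / (4 * x ^ 2)

lemma key_eq (e : ℝ → ℝ)
    (he : ∀ μ < (0 : ℝ), 4 < e μ ∧ μ / (2 * π) * I (e μ) = 1) :
    ∀ μ < (0 : ℝ), e μ - 4 = μ ^ 2 * gfun (e μ) ∧ gfun (e μ) ≤ 1 / 2 := by
  intro μ hμ
  obtain ⟨h4, heq⟩ := he μ hμ
  set E := e μ with hE
  have hE0 : (0:ℝ) ≤ E := by linarith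
  set a := Real.sqrt E with hadef
  have ha2 : 2 < a := by
    rw [hadef]
    rw [show (2:ℝ) = Real.sqrt 4 by
      rw [show (4:ℝ) = 2 ^ 2 by norm_num, Real.sqrt_sq (by norm_num)]]
    exact Real.sqrt_lt_sqrt (by norm_num) h4
  have haE : a ^ 2 = E := Real.sq_sqrt hE0
  set k₁ := Real.sqrt (a ^ 2 - 2 * a) with hk1def
  set k₂ := Real.sqrt (a ^ 2 + 2 * a) with hk2def
  have hk1pos : 0 < k₁ := Real.sqrt_pos.mpr (by nlinarith)
  have hk2pos : 0 < k₂ := Real.sqrt_pos.mpr (by nlinarith)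
  have hk1sq : k₁ ^ 2 = a ^ 2 - 2 * a := Real.sq_sqrt (by nlinarith)
  have hk2sq : k₂ ^ 2 = a ^ 2 + 2 * a := Real.sq_sqrt (by nlinarith)
  have hIE : I E = -(1 / (2 * a)) * (2 * π / k₁ + 2 * π / k₂) := by
    rw [← haE]; exact I_eval a ha2
  rw [hIE] at heq
  have ha0 : (0:ℝ) < a := by linarith
  have hS : 0 < k₁ + k₂ := by linarith
  have hpi := Real.pi_pos
  have hmu : μ = -(2 * a * k₁ * k₂) / (k₁ + k₂) := by
    rw [eq_div_iff hS.ne']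
    field_simp at heq
    have h2 : (2 * π) * (μ * (k₁ + k₂)) = (2 * π) * (-(2 * a * k₁ * k₂)) := by
      linear_combination (-2 * π) * heq
    exact mul_left_cancel₀ (by positivity) h2
  have hgE : gfun E = (k₁ + k₂) ^ 2 / (4 * a ^ 4) := by
    rw [gfun, ← hadef, ← haE]
    rw [show a ^ 2 - 2 * a = (a ^ 2 - 2 * a) by ring]
    rw [← hk1def, ← hk2def]
    ring_nf
  have hmusq : μ ^ 2 = 4 * a ^ 2 * k₁ ^ 2 * k₂ ^ 2 / (k₁ + k₂) ^ 2 := by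
    rw [hmu, div_pow]; congr 1; ring
  have hprod : k₁ ^ 2 * k₂ ^ 2 = a ^ 2 * (a ^ 2 - 4) := by
    rw [hk1sq, hk2sq]; ring
  constructor
  · rw [hmusq, hgE, ← haE]
    rw [div_mul_div_comm]
    rw [eq_div_iff (by positivity)]
    linear_combination (-(4 * a ^ 2) * (k₁ + k₂) ^ 2) * hprod
  · rw [hgE]
    have hk12 : k₁ ≤ k₂ := by
      rw [hk1def, hk2def]
      exact Real.sqrt_le_sqrt (by nlinarith)
    rw [div_le_iff₀ (by positivity)]
    nlinarith [sq_nonneg (k₂ - k₁), hk2sq]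

lemma gfun_cont : ContinuousAt gfun 4 := by
  have c1 : Continuous fun x : ℝ => Real.sqrt (x - 2 * Real.sqrt x) :=
    Real.continuous_sqrt.comp (continuous_id.sub (continuous_const.mul Real.continuous_sqrt))
  have c2 : Continuous fun x : ℝ => Real.sqrt (x + 2 * Real.sqrt x) :=
    Real.continuous_sqrt.comp (continuous_id.add (continuous_const.mul Real.continuous_sqrt))
  exact ContinuousAt.div (((c1.add c2).pow 2).continuousAt)
    ((continuous_const.mul (continuous_pow 2)).continuousAt) (by norm_num)

lemma gfun_four : gfun 4 = 1 / 8 := by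
  have h4 : Real.sqrt 4 = 2 := by
    rw [show (4:ℝ) = 2 ^ 2 by norm_num, Real.sqrt_sq (by norm_num)]
  rw [gfun, h4]
  norm_num

theorem e_asymptotic_at_zero_neg (e : ℝ → ℝ)
    (he : ∀ μ < (0 : ℝ), 4 < e μ ∧ μ / (2 * π) * I (e μ) = 1) :
    Filter.Tendsto (fun μ => (e μ - 4) / μ ^ 2)
      (nhdsWithin 0 (Set.Iio 0)) (nhds (1 / 8)) := by
  have key := key_eq e he
  have hEtendsto : Filter.Tendsto e (nhdsWithin 0 (Set.Iio 0)) (nhds 4) := by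
    have hlow : ∀ᶠ μ in nhdsWithin (0:ℝ) (Set.Iio 0), 4 ≤ e μ := by
      filter_upwards [self_mem_nhdsWithin] with μ hμ
      exact le_of_lt (he μ hμ).1
    have hhigh : ∀ᶠ μ in nhdsWithin (0:ℝ) (Set.Iio 0), e μ ≤ 4 + μ ^ 2 / 2 := by
      filter_upwards [self_mem_nhdsWithin] with μ hμ
      obtain ⟨h1, h2⟩ := key μ hμ
      nlinarith [sq_nonneg μ]
    have hupper : Filter.Tendsto (fun μ : ℝ => 4 + μ ^ 2 / 2)
        (nhdsWithin 0 (Set.Iio 0)) (nhds 4) := by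
      have : Filter.Tendsto (fun μ : ℝ => 4 + μ ^ 2 / 2) (nhds 0) (nhds (4 + 0 ^ 2 / 2)) :=
        (Continuous.tendsto (by continuity) 0)
      simpa using this.mono_left nhdsWithin_le_nhds
    exact tendsto_of_tendsto_of_tendsto_of_le_of_le' tendsto_const_nhds hupper hlow hhigh
  have hcomp : Filter.Tendsto (fun μ => gfun (e μ))
      (nhdsWithin 0 (Set.Iio 0)) (nhds (1 / 8)) := by
    rw [← gfun_four]
    exact (gfun_cont.tendsto).comp hEtendsto
  refine hcomp.congr' ?_
  filter_upwards [self_mem_nhdsWithin] with μ hμ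
  have hμ0 : μ ≠ 0 := ne_of_lt hμ
  have h := (key μ hμ).1
  rw [h, mul_comm, mul_div_assoc, div_self (pow_ne_zero 2 hμ0), mul_one]
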